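/- Upper bound via the linear program (Theorem 1, bound (12)): suppose random variables X : Ω → 𝒳, Y : Ω → 𝒴, U : Ω → 𝒰 (finite-valued, on a common probability space) satisfy I[X:U] = 0, I[X:U|Y] = 0, and H[Y|(X,U)] = 0. Let S ⊆ ℝ be the set of values Σ_{y ∈ 𝒴} μ(Y = y)·a(y) over all a : 𝒴 → ℝ with a(y) ≥ 0 for all y and Σ_{y ∈ 𝒴} (μ(Y = y) − μ(Y = y | X = x))·a(y) = H[Y | X ← x] − H[Y|X] for every x with μ(X = x) > 0. If S is bounded above, then H[U] ≤ H[Y|X] + sSup S. -/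

import Mathlib

open MeasureTheory ProbabilityTheory Real

noncomputable section

variable {Ω : Type*} [MeasurableSpace Ω]

/-- Shannon entropy (natural logarithm) of a finite-valued random variable `Z` under `μ`. -/
def ent {S : Type*} [Fintype S] (μ : Measure Ω) (Z : Ω → S) : ℝ :=
  ∑ z : S, Real.negMulLog (μ (Z ⁻¹' {z})).toReal

/-- Conditional entropy `H[Z₁ | Z₂] = H[(Z₁,Z₂)] - H[Z₂]`. -/
def condEnt {S T : Type*} [Fintype S] [Fintype T] (μ : Measure Ω)
    (Z₁ : Ω → S) (Z₂ : Ω → T) : ℝ :=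
  ent μ (fun ω => (Z₁ ω, Z₂ ω)) - ent μ Z₂

/-- Mutual information `I[Z₁ : Z₂] = H[Z₁] + H[Z₂] - H[(Z₁,Z₂)]`. -/
def mutInfo {S T : Type*} [Fintype S] [Fintype T] (μ : Measure Ω)
    (Z₁ : Ω → S) (Z₂ : Ω → T) : ℝ :=
  ent μ Z₁ + ent μ Z₂ - ent μ (fun ω => (Z₁ ω, Z₂ ω))

/-- Conditional mutual information
`I[Z₁ : Z₂ | Z₃] = H[(Z₁,Z₃)] + H[(Z₂,Z₃)] - H[(Z₁,Z₂,Z₃)] - H[Z₃]`. -/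
def condMutInfo {S T R : Type*} [Fintype S] [Fintype T] [Fintype R] (μ : Measure Ω)
    (Z₁ : Ω → S) (Z₂ : Ω → T) (Z₃ : Ω → R) : ℝ :=
  ent μ (fun ω => (Z₁ ω, Z₃ ω)) + ent μ (fun ω => (Z₂ ω, Z₃ ω))
    - ent μ (fun ω => (Z₁ ω, Z₂ ω, Z₃ ω)) - ent μ Z₃

section Aux
open Finset


variable {α β : Type*} [Fintype α] [Fintype β]

/-- negMulLog vanishes only at 0 and 1 on nonnegatives. -/
lemma negMulLog_eq_zero_cases {r : ℝ} (h0 : 0 ≤ r) (h : Real.negMulLog r = 0) :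
    r = 0 ∨ r = 1 := by
  rw [Real.negMulLog, neg_mul, neg_eq_zero, mul_eq_zero] at h
  rcases h with h | h
  · exact Or.inl h
  · rcases Real.log_eq_zero.mp h with h | h | h
    · exact Or.inl h
    · exact Or.inr h
    · exfalso; linarith

/-- Chain rule for `negMulLog` sums. -/
lemma chainRule (p : α → β → ℝ) (hp : ∀ a b, 0 ≤ p a b) :
    ∑ a, ∑ b, negMulLog (p a b)
      = ∑ a, negMulLog (∑ b, p a b)
        + ∑ a, (∑ b, p a b) * ∑ b, negMulLog (p a b / ∑ b', p a b') := by
  rw [← Finset.sum_add_distrib]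
  refine Finset.sum_congr rfl fun a _ => ?_
  rcases eq_or_lt_of_le (Finset.sum_nonneg (fun b _ => hp a b)) with h0 | hpos
  · have hz : ∀ b ∈ Finset.univ, p a b = 0 :=
      (Finset.sum_eq_zero_iff_of_nonneg (fun b _ => hp a b)).mp h0.symm
    simp only [← h0]
    rw [Finset.sum_congr rfl (fun b hb => by rw [hz b hb])]
    simp
  · set s := ∑ b, p a b with hs
    have hsne : s ≠ 0 := ne_of_gt hpos
    have key : ∀ b, negMulLog (p a b) = (p a b / s) * negMulLog s + s * negMulLog (p a b / s) := by
      intro b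
      have hsr : p a b / s * s = p a b := div_mul_cancel₀ _ hsne
      calc negMulLog (p a b) = negMulLog (p a b / s * s) := by rw [hsr]
        _ = s * negMulLog (p a b / s) + (p a b / s) * negMulLog s := negMulLog_mul _ _
        _ = (p a b / s) * negMulLog s + s * negMulLog (p a b / s) := by ring
    rw [Finset.sum_congr rfl (fun b _ => key b), Finset.sum_add_distrib,
      ← Finset.sum_mul, ← Finset.mul_sum, ← Finset.sum_div, ← hs, div_self hsne, one_mul]

/-- Jensen row inequality. -/
lemma row_le (p : α → β → ℝ) (hp : ∀ a b, 0 ≤ p a b)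
    (htot : ∑ b, ∑ a, p a b = 1) (a : α) :
    ∑ b, (∑ a', p a' b) * negMulLog (p a b / ∑ a', p a' b) ≤ negMulLog (∑ b, p a b) := by
  have hmargnn : ∀ b, (0:ℝ) ≤ ∑ a', p a' b := fun b => Finset.sum_nonneg fun a' _ => hp a' b
  have hle : ∀ b, p a b ≤ ∑ a', p a' b := fun b =>
    Finset.single_le_sum (fun a' _ => hp a' b) (Finset.mem_univ a)
  have hcenter : ∑ b, (∑ a', p a' b) • (p a b / ∑ a', p a' b) = ∑ b, p a b := by
    refine Finset.sum_congr rfl fun b _ => ?_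
    rcases eq_or_lt_of_le (hmargnn b) with h0 | hposb
    · have : p a b = 0 := le_antisymm (h0 ▸ hle b) (hp a b)
      simp [this]
    · rw [smul_eq_mul, mul_div_cancel₀ _ (ne_of_gt hposb)]
  have := concaveOn_negMulLog.le_map_sum (t := Finset.univ)
    (w := fun b => ∑ a', p a' b) (p := fun b => p a b / ∑ a', p a' b)
    (fun b _ => hmargnn b) htot
    (fun b _ => Set.mem_Ici.mpr (div_nonneg (hp a b) (hmargnn b)))
  rw [hcenter] at this
  simpa [smul_eq_mul] using this

lemma rows_total (p : α → β → ℝ) (hp : ∀ a b, 0 ≤ p a b) :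
    ∑ a, ∑ b, (∑ a', p a' b) * negMulLog (p a b / ∑ a', p a' b)
      = ∑ a, ∑ b, negMulLog (p a b) - ∑ b, negMulLog (∑ a', p a' b) := by
  have := chainRule (fun b a => p a b) (fun b a => hp a b)
  rw [Finset.sum_comm (f := fun a b => (∑ a', p a' b) * negMulLog (p a b / ∑ a', p a' b))]
  rw [Finset.sum_comm (f := fun a b => negMulLog (p a b))] at *
  have h2 : ∑ b, ∑ a, (∑ a', p a' b) * negMulLog (p a b / ∑ a', p a' b)
      = ∑ b, (∑ a, p a b) * ∑ a, negMulLog (p a b / ∑ a', p a' b) := by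
    refine Finset.sum_congr rfl fun b _ => ?_
    rw [Finset.mul_sum]
  rw [h2]
  linarith [this]

lemma mutinfo_nonneg (p : α → β → ℝ) (hp : ∀ a b, 0 ≤ p a b)
    (htot : ∑ b, ∑ a, p a b = 1) :
    ∑ a, ∑ b, negMulLog (p a b)
      ≤ ∑ a, negMulLog (∑ b, p a b) + ∑ b, negMulLog (∑ a, p a b) := by
  have h := Finset.sum_le_sum (s := Finset.univ)
    (fun a _ => row_le p hp htot a)
  rw [rows_total p hp] at h
  linarith

lemma indep_of_eq (p : α → β → ℝ) (hp : ∀ a b, 0 ≤ p a b)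
    (htot : ∑ b, ∑ a, p a b = 1)
    (heq : ∑ a, ∑ b, negMulLog (p a b)
      = ∑ a, negMulLog (∑ b, p a b) + ∑ b, negMulLog (∑ a, p a b)) :
    ∀ a b, p a b = (∑ b', p a b') * (∑ a', p a' b) := by
  have hrow_eq : ∀ a, ∑ b, (∑ a', p a' b) * negMulLog (p a b / ∑ a', p a' b)
      = negMulLog (∑ b, p a b) := by
    by_contra hcon
    push_neg at hcon
    obtain ⟨a₀, ha₀⟩ := hcon
    have hlt : ∑ a, ∑ b, (∑ a', p a' b) * negMulLog (p a b / ∑ a', p a' b)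
        < ∑ a, negMulLog (∑ b, p a b) :=
      Finset.sum_lt_sum (fun a _ => row_le p hp htot a)
        ⟨a₀, Finset.mem_univ a₀, lt_of_le_of_ne (row_le p hp htot a₀) ha₀⟩
    rw [rows_total p hp] at hlt
    linarith
  intro a b
  have hmargnn : ∀ b, (0:ℝ) ≤ ∑ a', p a' b := fun b => Finset.sum_nonneg fun a' _ => hp a' b
  have hle : ∀ b', p a b' ≤ ∑ a', p a' b' := fun b' =>
    Finset.single_le_sum (fun a' _ => hp a' b') (Finset.mem_univ a)
  rcases eq_or_lt_of_le (hmargnn b) with h0 | hposb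
  · have : p a b = 0 := le_antisymm (h0 ▸ hle b) (hp a b)
    rw [this, ← h0, mul_zero]
  · have hcenter : ∑ b', (∑ a', p a' b') * (p a b' / ∑ a', p a' b') = ∑ b', p a b' := by
      refine Finset.sum_congr rfl fun b' _ => ?_
      rcases eq_or_lt_of_le (hmargnn b') with h0 | hposb'
      · have : p a b' = 0 := le_antisymm (h0 ▸ hle b') (hp a b')
        simp [this]
      · rw [mul_div_cancel₀ _ (ne_of_gt hposb')]
    have hiff := strictConcaveOn_negMulLog.map_sum_eq_iff' (t := Finset.univ)
      (w := fun b' => ∑ a', p a' b') (p := fun b' => p a b' / ∑ a', p a' b')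
      (fun b' _ => hmargnn b') htot
      (fun b' _ => Set.mem_Ici.mpr (div_nonneg (hp a b') (hmargnn b')))
    simp only [smul_eq_mul] at hiff
    rw [hcenter] at hiff
    have heq' : negMulLog (∑ b', p a b')
        = ∑ b', (∑ a', p a' b') * negMulLog (p a b' / ∑ a', p a' b') := (hrow_eq a).symm
    have hkey := (hiff.mp heq') b (Finset.mem_univ b) (ne_of_gt hposb)
    exact (div_eq_iff (ne_of_gt hposb)).mp hkey



lemma sum_negMulLog_of_binary {κ : Type*} [Fintype κ] (g : κ → ℝ) (c : ℝ)
    (hg : ∀ k, g k = 0 ∨ g k = c) (hsum : ∑ k, g k = c) :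
    ∑ k, negMulLog (g k) = negMulLog c := by
  rcases eq_or_ne c 0 with hc | hc
  · have hz : ∀ k, g k = 0 := by
      intro k
      rcases hg k with h | h
      · exact h
      · rw [h, hc]
    simp [hz, hc]
  · classical
    set T := Finset.univ.filter (fun k => g k = c) with hT
    have hsplit : ∀ (F : ℝ → ℝ), F 0 = 0 → ∑ k, F (g k) = T.card * F c := by
      intro F hF0
      rw [← Finset.sum_filter_add_sum_filter_not Finset.univ (fun k => g k = c) (fun k => F (g k))]
      have h1 : ∑ k ∈ T, F (g k) = T.card * F c := by
        rw [Finset.sum_congr rfl (fun k hk => by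
          rw [(Finset.mem_filter.mp hk).2])]
        simp [mul_comm]
      have h2 : ∑ k ∈ Finset.univ.filter (fun k => ¬ g k = c), F (g k) = 0 := by
        apply Finset.sum_eq_zero
        intro k hk
        have hzk : g k = 0 := by
          rcases hg k with h | h
          · exact h
          · exact absurd h (Finset.mem_filter.mp hk).2
        rw [hzk, hF0]
      rw [h1, h2, add_zero]
    have hcard : (T.card : ℝ) * c = c := by
      have h := hsplit id rfl
      simp only [id] at h
      rw [← h, hsum]
    have hcard1 : (T.card : ℝ) = 1 := by
      have : (T.card : ℝ) * c = 1 * c := by rw [hcard, one_mul]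
      exact mul_right_cancel₀ hc this
    have h := hsplit negMulLog negMulLog_zero
    rw [h, hcard1, one_mul]

section Core

variable {𝒳 𝒴 𝒰 : Type*} [Fintype 𝒳] [Fintype 𝒴] [Fintype 𝒰]

lemma core (f : 𝒳 → 𝒴 → 𝒰 → ℝ)
    (pX : 𝒳 → ℝ) (pY : 𝒴 → ℝ) (pU : 𝒰 → ℝ)
    (pXY : 𝒳 → 𝒴 → ℝ) (pYU : 𝒴 → 𝒰 → ℝ) (pXU : 𝒳 → 𝒰 → ℝ) (a : 𝒴 → ℝ)
    (hf : ∀ x y u, 0 ≤ f x y u)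
    (hpX : ∀ x, pX x = ∑ y, ∑ u, f x y u)
    (hpY : ∀ y, pY y = ∑ x, ∑ u, f x y u)
    (hpU : ∀ u, pU u = ∑ x, ∑ y, f x y u)
    (hpXY : ∀ x y, pXY x y = ∑ u, f x y u)
    (hpYU : ∀ y u, pYU y u = ∑ x, f x y u)
    (hpXU : ∀ x u, pXU x u = ∑ y, f x y u)
    (ha : ∀ y, a y = ∑ u, negMulLog (pYU y u / pY y))
    (htot : ∑ x, pX x = 1)
    (hA1 : ∑ x, negMulLog (pX x) + ∑ u, negMulLog (pU u) = ∑ x, ∑ u, negMulLog (pXU x u))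
    (hA2 : ∑ x, ∑ y, negMulLog (pXY x y) + ∑ y, ∑ u, negMulLog (pYU y u)
        = ∑ x, ∑ y, ∑ u, negMulLog (f x y u) + ∑ y, negMulLog (pY y))
    (hA3 : ∑ x, ∑ y, ∑ u, negMulLog (f x y u) = ∑ x, ∑ u, negMulLog (pXU x u)) :
    (∀ x, 0 < pX x →
      ∑ u, negMulLog (pU u)
        = ∑ y, negMulLog (pXY x y / pX x) + ∑ y, (pXY x y / pX x) * a y)
    ∧ ∑ u, negMulLog (pU u)
        = (∑ x, ∑ y, negMulLog (pXY x y) - ∑ x, negMulLog (pX x)) + ∑ y, pY y * a y := by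
  classical
  -- nonnegativity of marginals
  have hpXYnn : ∀ x y, 0 ≤ pXY x y := fun x y => (hpXY x y) ▸ Finset.sum_nonneg fun u _ => hf x y u
  have hpYUnn : ∀ y u, 0 ≤ pYU y u := fun y u => (hpYU y u) ▸ Finset.sum_nonneg fun x _ => hf x y u
  have hpXUnn : ∀ x u, 0 ≤ pXU x u := fun x u => (hpXU x u) ▸ Finset.sum_nonneg fun y _ => hf x y u
  have hpXnn : ∀ x, 0 ≤ pX x := fun x =>
    (hpX x) ▸ Finset.sum_nonneg fun y _ => Finset.sum_nonneg fun u _ => hf x y u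
  have hpYnn : ∀ y, 0 ≤ pY y := fun y =>
    (hpY y) ▸ Finset.sum_nonneg fun x _ => Finset.sum_nonneg fun u _ => hf x y u
  have hpUnn : ∀ u, 0 ≤ pU u := fun u =>
    (hpU u) ▸ Finset.sum_nonneg fun x _ => Finset.sum_nonneg fun y _ => hf x y u
  -- marginal consistency
  have hmxy : ∀ x, ∑ y, pXY x y = pX x := by
    intro x; rw [hpX]; exact Finset.sum_congr rfl fun y _ => hpXY x y
  have hmxu : ∀ x, ∑ u, pXU x u = pX x := by
    intro x; rw [hpX, Finset.sum_comm]; exact Finset.sum_congr rfl fun u _ => hpXU x u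
  have hmyx : ∀ y, ∑ x, pXY x y = pY y := by
    intro y; rw [hpY]; exact Finset.sum_congr rfl fun x _ => hpXY x y
  have hmyu : ∀ y, ∑ u, pYU y u = pY y := by
    intro y; rw [hpY, Finset.sum_comm]; exact Finset.sum_congr rfl fun u _ => hpYU y u
  have hmux : ∀ u, ∑ x, pXU x u = pU u := by
    intro u; rw [hpU]; exact Finset.sum_congr rfl fun x _ => hpXU x u
  have hmuy : ∀ u, ∑ y, pYU y u = pU u := by
    intro u; rw [hpU, Finset.sum_comm]; exact Finset.sum_congr rfl fun y _ => hpYU y u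
  have htotY : ∑ y, pY y = 1 := by
    calc ∑ y, pY y = ∑ y, ∑ x, ∑ u, f x y u := Finset.sum_congr rfl fun y _ => hpY y
      _ = ∑ x, ∑ y, ∑ u, f x y u := Finset.sum_comm
      _ = ∑ x, pX x := Finset.sum_congr rfl fun x _ => (hpX x).symm
      _ = 1 := htot
  have htotU : ∑ u, pU u = 1 := by
    calc ∑ u, pU u = ∑ u, ∑ x, ∑ y, f x y u := Finset.sum_congr rfl fun u _ => hpU u
      _ = ∑ x, ∑ u, ∑ y, f x y u := Finset.sum_comm
      _ = ∑ x, ∑ y, ∑ u, f x y u := Finset.sum_congr rfl fun x _ => Finset.sum_comm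
      _ = ∑ x, pX x := Finset.sum_congr rfl fun x _ => (hpX x).symm
      _ = 1 := htot
  -- pointwise bounds
  have hf_le_pXY : ∀ x y u, f x y u ≤ pXY x y := fun x y u =>
    (hpXY x y) ▸ Finset.single_le_sum (fun u' _ => hf x y u') (Finset.mem_univ u)
  have hf_le_pXU : ∀ x y u, f x y u ≤ pXU x u := fun x y u =>
    (hpXU x u) ▸ Finset.single_le_sum (fun y' _ => hf x y' u) (Finset.mem_univ y)
  have hpXY_le_pY : ∀ x y, pXY x y ≤ pY y := fun x y =>
    (hmyx y) ▸ Finset.single_le_sum (fun x' _ => hpXYnn x' y) (Finset.mem_univ x)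
  have hpXY_le_pX : ∀ x y, pXY x y ≤ pX x := fun x y =>
    (hmxy x) ▸ Finset.single_le_sum (fun y' _ => hpXYnn x y') (Finset.mem_univ y)
  -- ** P1 : independence of X and U **
  have hP1 : ∀ x u, pXU x u = pX x * pU u := by
    have htot' : ∑ u, ∑ x, pXU x u = 1 := by
      calc ∑ u, ∑ x, pXU x u = ∑ u, pU u := Finset.sum_congr rfl fun u _ => hmux u
        _ = 1 := htotU
    have heq : ∑ x, ∑ u, negMulLog (pXU x u)
        = ∑ x, negMulLog (∑ u, pXU x u) + ∑ u, negMulLog (∑ x, pXU x u) := by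
      have e1 : ∑ x, negMulLog (∑ u, pXU x u) = ∑ x, negMulLog (pX x) :=
        Finset.sum_congr rfl fun x _ => by rw [hmxu x]
      have e2 : ∑ u, negMulLog (∑ x, pXU x u) = ∑ u, negMulLog (pU u) :=
        Finset.sum_congr rfl fun u _ => by rw [hmux u]
      rw [e1, e2]
      exact hA1.symm
    have h := indep_of_eq (fun x u => pXU x u) (fun x u => hpXUnn x u) htot' heq
    intro x u
    have := h x u
    rwa [hmxu x, hmux u] at this
  -- ** P3 : Y is determined by (X,U) **
  have hP3 : ∀ x y u, f x y u = 0 ∨ f x y u = pXU x u := by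
    have hch := chainRule (α := 𝒳 × 𝒰) (β := 𝒴) (fun z y => f z.1 y z.2)
      (fun z y => hf z.1 y z.2)
    simp only [Fintype.sum_prod_type] at hch
    have hrw1 : ∀ x u, (∑ y, f x y u) = pXU x u := fun x u => (hpXU x u).symm
    simp only [hrw1] at hch
    have hlhs : ∑ x, ∑ u, ∑ y, negMulLog (f x y u) = ∑ x, ∑ y, ∑ u, negMulLog (f x y u) :=
      Finset.sum_congr rfl fun x _ => Finset.sum_comm
    rw [hlhs, hA3] at hch
    have hzero : ∑ x, ∑ u, pXU x u * (∑ y, negMulLog (f x y u / pXU x u)) = 0 := by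
      linarith
    have hratio01 : ∀ x y u, 0 ≤ f x y u / pXU x u ∧ f x y u / pXU x u ≤ 1 := by
      intro x y u
      rcases eq_or_lt_of_le (hpXUnn x u) with h0 | hpos
      · rw [← h0, div_zero]; exact ⟨le_refl 0, zero_le_one⟩
      · exact ⟨div_nonneg (hf x y u) (hpXUnn x u),
          (div_le_one hpos).mpr (hf_le_pXU x y u)⟩
    have hterm_nn : ∀ x u, 0 ≤ pXU x u * (∑ y, negMulLog (f x y u / pXU x u)) := by
      intro x u
      apply mul_nonneg (hpXUnn x u)
      exact Finset.sum_nonneg fun y _ =>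
        negMulLog_nonneg (hratio01 x y u).1 (hratio01 x y u).2
    have hall : ∀ x, ∀ u, pXU x u * (∑ y, negMulLog (f x y u / pXU x u)) = 0 := by
      have houter := (Finset.sum_eq_zero_iff_of_nonneg
        (fun x (_ : x ∈ Finset.univ) =>
          Finset.sum_nonneg fun u _ => hterm_nn x u)).mp hzero
      intro x u
      exact (Finset.sum_eq_zero_iff_of_nonneg
        (fun u (_ : u ∈ Finset.univ) => hterm_nn x u)).mp
        (houter x (Finset.mem_univ x)) u (Finset.mem_univ u)
    intro x y u
    rcases eq_or_lt_of_le (hpXUnn x u) with h0 | hpos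
    · left
      exact le_antisymm (h0 ▸ hf_le_pXU x y u) (hf x y u)
    · have hsum0 : ∑ y, negMulLog (f x y u / pXU x u) = 0 := by
        rcases mul_eq_zero.mp (hall x u) with h | h
        · exact absurd h (ne_of_gt hpos)
        · exact h
      have heach := (Finset.sum_eq_zero_iff_of_nonneg
        (fun y (_ : y ∈ Finset.univ) =>
          negMulLog_nonneg (hratio01 x y u).1 (hratio01 x y u).2)).mp hsum0 y
          (Finset.mem_univ y)
      rcases negMulLog_eq_zero_cases (hratio01 x y u).1 heach with h | h
      · left
        have := (div_eq_zero_iff.mp h)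
        rcases this with h' | h'
        · exact h'
        · exact absurd h' (ne_of_gt hpos)
      · right
        field_simp at h
        exact h
  -- ** P2 : conditional independence of X and U given Y **
  have hP2 : ∀ x y u, pY y * f x y u = pXY x y * pYU y u := by
    -- chain rules
    have hC1 := chainRule (fun y x => pXY x y) (fun y x => hpXYnn x y)
    simp only [hmyx] at hC1
    have hC2 := chainRule (fun y u => pYU y u) (fun y u => hpYUnn y u)
    simp only [hmyu] at hC2
    have hC3 := chainRule (α := 𝒴) (β := 𝒳 × 𝒰) (fun y z => f z.1 y z.2)
      (fun y z => hf z.1 y z.2)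
    simp only [Fintype.sum_prod_type] at hC3
    have hrwY : ∀ y, (∑ x, ∑ u, f x y u) = pY y := fun y => (hpY y).symm
    simp only [hrwY] at hC3
    -- rearrange LHS sums to match hA2
    rw [Finset.sum_comm (f := fun y x => negMulLog (pXY x y))] at hC1
    rw [Finset.sum_comm (f := fun y x => ∑ u, negMulLog (f x y u))] at hC3
    -- D y nonnegative after multiplying by pY y
    set Dx : 𝒴 → ℝ := fun y => ∑ x, negMulLog (pXY x y / pY y) with hDx
    set Du : 𝒴 → ℝ := fun y => ∑ u, negMulLog (pYU y u / pY y) with hDu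
    set Dxu : 𝒴 → ℝ := fun y => ∑ x, ∑ u, negMulLog (f x y u / pY y) with hDxu
    have hC1' : ∑ x, ∑ y, negMulLog (pXY x y)
        = ∑ y, negMulLog (pY y) + ∑ y, pY y * Dx y := hC1
    have hC2' : ∑ y, ∑ u, negMulLog (pYU y u)
        = ∑ y, negMulLog (pY y) + ∑ y, pY y * Du y := hC2
    have hC3' : ∑ x, ∑ y, ∑ u, negMulLog (f x y u)
        = ∑ y, negMulLog (pY y) + ∑ y, pY y * Dxu y := hC3
    have hzero : ∑ y, (pY y * Dx y + pY y * Du y - pY y * Dxu y) = 0 := by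
      rw [Finset.sum_sub_distrib, Finset.sum_add_distrib]
      linarith [hA2, hC1', hC2', hC3']
    have hDnn : ∀ y, 0 < pY y → Dx y + Du y - Dxu y ≥ 0 := by
      intro y hy
      have hq : ∀ x u, (0:ℝ) ≤ f x y u / pY y := fun x u => div_nonneg (hf x y u) (hpYnn y)
      have hqtot : ∑ u, ∑ x, f x y u / pY y = 1 := by
        rw [Finset.sum_congr rfl fun u (_ : u ∈ Finset.univ) => (Finset.sum_div _ _ _).symm]
        rw [← Finset.sum_div, ← Finset.sum_comm, ← hpY y, div_self (ne_of_gt hy)]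
      have h := mutinfo_nonneg (fun x u => f x y u / pY y) hq hqtot
      have hrow : ∀ x, (∑ u, f x y u / pY y) = pXY x y / pY y := by
        intro x; rw [← Finset.sum_div, ← hpXY x y]
      have hcol : ∀ u, (∑ x, f x y u / pY y) = pYU y u / pY y := by
        intro u; rw [← Finset.sum_div, ← hpYU y u]
      simp only [hrow, hcol] at h
      have : Dxu y ≤ Dx y + Du y := h
      linarith
    have htermnn : ∀ y, 0 ≤ pY y * Dx y + pY y * Du y - pY y * Dxu y := by
      intro y
      rcases eq_or_lt_of_le (hpYnn y) with h0 | hpos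
      · rw [← h0]; ring_nf; exact le_refl 0
      · have := hDnn y hpos
        nlinarith
    have hall : ∀ y, pY y * Dx y + pY y * Du y - pY y * Dxu y = 0 := by
      intro y
      exact (Finset.sum_eq_zero_iff_of_nonneg
        (fun y (_ : y ∈ Finset.univ) => htermnn y)).mp hzero y (Finset.mem_univ y)
    intro x y u
    rcases eq_or_lt_of_le (hpYnn y) with h0 | hpos
    · have hf0 : f x y u = 0 := le_antisymm
        (le_trans (hf_le_pXY x y u) (h0 ▸ hpXY_le_pY x y)) (hf x y u)
      have hXY0 : pXY x y = 0 := le_antisymm (h0 ▸ hpXY_le_pY x y) (hpXYnn x y)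
      rw [hf0, hXY0, mul_zero, zero_mul]
    · have hDeq : Dxu y = Dx y + Du y := by
        have h := hall y
        have hne := ne_of_gt hpos
        have : pY y * (Dx y + Du y - Dxu y) = 0 := by ring_nf; linarith [h]
        rcases mul_eq_zero.mp this with h' | h'
        · exact absurd h' hne
        · linarith
      have hq : ∀ x u, (0:ℝ) ≤ f x y u / pY y := fun x u => div_nonneg (hf x y u) (hpYnn y)
      have hqtot : ∑ u, ∑ x, f x y u / pY y = 1 := by
        rw [Finset.sum_congr rfl fun u (_ : u ∈ Finset.univ) => (Finset.sum_div _ _ _).symm]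
        rw [← Finset.sum_div, ← Finset.sum_comm, ← hpY y, div_self (ne_of_gt hpos)]
      have hrow : ∀ x, (∑ u, f x y u / pY y) = pXY x y / pY y := by
        intro x; rw [← Finset.sum_div, ← hpXY x y]
      have hcol : ∀ u, (∑ x, f x y u / pY y) = pYU y u / pY y := by
        intro u; rw [← Finset.sum_div, ← hpYU y u]
      have heq : ∑ x, ∑ u, negMulLog (f x y u / pY y)
          = ∑ x, negMulLog (∑ u, f x y u / pY y) + ∑ u, negMulLog (∑ x, f x y u / pY y) := by
        simp only [hrow, hcol]
        exact hDeq
      have h := indep_of_eq (fun x u => f x y u / pY y) hq hqtot heq x u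
      rw [hrow x, hcol u] at h
      have hyne := ne_of_gt hpos
      field_simp at h
      have hgoal : pY y * f x y u * pY y = pXY x y * pYU y u * pY y := by
        linear_combination (pY y) * h
      exact mul_right_cancel₀ hyne hgoal
  -- ** the local identity **
  have hlocal : ∀ x, 0 < pX x →
      ∑ u, negMulLog (pU u)
        = ∑ y, negMulLog (pXY x y / pX x) + ∑ y, (pXY x y / pX x) * a y := by
    intro x hx
    have hxne := ne_of_gt hx
    set q : 𝒴 → 𝒰 → ℝ := fun y u => f x y u / pX x with hq
    have hqnn : ∀ y u, 0 ≤ q y u := fun y u => div_nonneg (hf x y u) (hpXnn x)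
    have hst1 : ∀ y, ∑ u, q y u = pXY x y / pX x := by
      intro y; rw [hq]; simp only; rw [← Finset.sum_div, ← hpXY x y]
    have hst2 : ∀ u, ∑ y, q y u = pU u := by
      intro u; rw [hq]; simp only
      rw [← Finset.sum_div, ← hpXU x u, hP1 x u, mul_comm, mul_div_assoc, div_self hxne, mul_one]
    have hst3 : ∀ u, ∑ y, negMulLog (q y u) = negMulLog (pU u) := by
      intro u
      apply sum_negMulLog_of_binary (fun y => q y u) (pU u) _ (hst2 u)
      intro y
      rcases hP3 x y u with h | h
      · left; rw [hq]; simp only [h, zero_div]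
      · right; rw [hq]; simp only [h, hP1 x u]
        rw [mul_comm, mul_div_assoc, div_self hxne, mul_one]
    have hch := chainRule q hqnn
    have hlhs : ∑ y, ∑ u, negMulLog (q y u) = ∑ u, negMulLog (pU u) := by
      rw [Finset.sum_comm]
      exact Finset.sum_congr rfl fun u _ => hst3 u
    rw [hlhs] at hch
    simp only [hst1] at hch
    have hst6 : ∀ y, (pXY x y / pX x) * (∑ u, negMulLog (q y u / (pXY x y / pX x)))
        = (pXY x y / pX x) * a y := by
      intro y
      rcases eq_or_lt_of_le (hpXYnn x y) with h0 | hposxy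
      · rw [← h0, zero_div, zero_mul, zero_mul]
      · have hpYpos : 0 < pY y := lt_of_lt_of_le hposxy (hpXY_le_pY x y)
        congr 1
        rw [ha y]
        refine Finset.sum_congr rfl fun u _ => ?_
        congr 1
        show (f x y u / pX x) / (pXY x y / pX x) = pYU y u / pY y
        have hp2 := hP2 x y u
        field_simp
        linear_combination hp2
    rw [Finset.sum_congr rfl fun y (_ : y ∈ Finset.univ) => hst6 y] at hch
    exact hch
  refine ⟨hlocal, ?_⟩
  -- ** the global identity **
  have hperx : ∀ x, pX x * (∑ u, negMulLog (pU u))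
      = pX x * (∑ y, negMulLog (pXY x y / pX x)) + ∑ y, pXY x y * a y := by
    intro x
    rcases eq_or_lt_of_le (hpXnn x) with h0 | hpos
    · have hXY0 : ∀ y, pXY x y = 0 := fun y =>
        le_antisymm (h0 ▸ hpXY_le_pX x y) (hpXYnn x y)
      simp [← h0, hXY0]
    · rw [hlocal x hpos, mul_add]
      congr 1
      rw [Finset.mul_sum]
      refine Finset.sum_congr rfl fun y _ => ?_
      rw [← mul_assoc, mul_div_cancel₀ _ (ne_of_gt hpos)]
  have hsum := Finset.sum_congr rfl fun x (_ : x ∈ Finset.univ) => hperx x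
  rw [← Finset.sum_mul, htot, one_mul] at hsum
  rw [hsum, Finset.sum_add_distrib]
  have hchXY := chainRule (fun x y => pXY x y) (fun x y => hpXYnn x y)
  simp only [hmxy] at hchXY
  have hswap : ∑ x, ∑ y, pXY x y * a y = ∑ y, pY y * a y := by
    rw [Finset.sum_comm]
    refine Finset.sum_congr rfl fun y _ => ?_
    rw [← Finset.sum_mul, hmyx y]
  rw [hswap]
  linarith [hchXY]

end Core


lemma sum_fiber {γ : Type*} [Fintype γ] [MeasurableSpace γ] [MeasurableSingletonClass γ]
    (μ : MeasureTheory.Measure Ω) [IsFiniteMeasure μ] {g : Ω → γ} (hg : Measurable g)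
    {B : Set Ω} (hB : MeasurableSet B) :
    (μ B).toReal = ∑ c : γ, (μ (B ∩ g ⁻¹' {c})).toReal := by
  classical
  rw [← ENNReal.toReal_sum (fun c _ => measure_ne_top μ _)]
  congr 1
  have hdecomp : B = ⋃ c ∈ (Finset.univ : Finset γ), B ∩ g ⁻¹' {c} := by
    ext ω; simp
  conv_lhs => rw [hdecomp]
  apply measure_biUnion_finset
  · intro c _ c' _ hne
    refine Set.disjoint_left.mpr ?_
    rintro ω ⟨_, hc⟩ ⟨_, hc'⟩
    simp only [Set.mem_preimage, Set.mem_singleton_iff] at hc hc'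
    exact hne (by rw [← hc, ← hc'])
  · exact fun c _ => hB.inter (hg (measurableSet_singleton c))

lemma preimage_pair {γ δ : Type*} (g : Ω → γ) (h : Ω → δ) (c : γ) (d : δ) :
    (fun ω => (g ω, h ω)) ⁻¹' {(c, d)} = g ⁻¹' {c} ∩ h ⁻¹' {d} := by
  ext ω; simp [Prod.ext_iff]

lemma preimage_triple {γ δ ε : Type*} (g : Ω → γ) (h : Ω → δ) (k : Ω → ε)
    (c : γ) (d : δ) (e : ε) :
    (fun ω => (g ω, h ω, k ω)) ⁻¹' {(c, d, e)} = g ⁻¹' {c} ∩ (h ⁻¹' {d} ∩ k ⁻¹' {e}) := by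
  ext ω; simp [Prod.ext_iff]

end Aux

/-- Upper bound via the linear program (Theorem 1, bound (12)). -/
theorem entropy_upper_bound_linear_program {𝒳 𝒴 𝒰 : Type*} [Fintype 𝒳] [Nonempty 𝒳] [MeasurableSpace 𝒳] [MeasurableSingletonClass 𝒳]
    [Fintype 𝒴] [Nonempty 𝒴] [MeasurableSpace 𝒴] [MeasurableSingletonClass 𝒴]
    [Fintype 𝒰] [Nonempty 𝒰] [MeasurableSpace 𝒰] [MeasurableSingletonClass 𝒰]
    (μ : Measure Ω) [IsProbabilityMeasure μ]
    (X : Ω → 𝒳) (Y : Ω → 𝒴) (U : Ω → 𝒰)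
    (hX : Measurable X) (hY : Measurable Y) (hU : Measurable U)
    (h1 : mutInfo μ X U = 0)
    (h2 : condMutInfo μ X U Y = 0)
    (h3 : condEnt μ Y (fun ω => (X ω, U ω)) = 0)
    (S : Set ℝ)
    (hS : S = {s : ℝ | ∃ a : 𝒴 → ℝ, (∀ y : 𝒴, 0 ≤ a y) ∧
      (∀ x : 𝒳, 0 < μ (X ⁻¹' {x}) →
        ∑ y : 𝒴, ((μ (Y ⁻¹' {y})).toReal - ((μ[|X ⁻¹' {x}]) (Y ⁻¹' {y})).toReal) * a y
          = ent (μ[|X ⁻¹' {x}]) Y - condEnt μ Y X) ∧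
      s = ∑ y : 𝒴, (μ (Y ⁻¹' {y})).toReal * a y})
    (hbdd : BddAbove S) :
    ent μ U ≤ condEnt μ Y X + sSup S := by
  classical
  have hmX : ∀ x, MeasurableSet (X ⁻¹' {x}) := fun x => hX (measurableSet_singleton x)
  have hmY : ∀ y, MeasurableSet (Y ⁻¹' {y}) := fun y => hY (measurableSet_singleton y)
  have hmU : ∀ u, MeasurableSet (U ⁻¹' {u}) := fun u => hU (measurableSet_singleton u)
  -- marginal identities
  have hpXf : ∀ x, (μ (X ⁻¹' {x})).toReal
      = ∑ y, ∑ u, (μ (X ⁻¹' {x} ∩ Y ⁻¹' {y} ∩ U ⁻¹' {u})).toReal := by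
    intro x
    rw [sum_fiber μ hY (hmX x)]
    exact Finset.sum_congr rfl fun y _ => sum_fiber μ hU ((hmX x).inter (hmY y))
  have hpYf : ∀ y, (μ (Y ⁻¹' {y})).toReal
      = ∑ x, ∑ u, (μ (X ⁻¹' {x} ∩ Y ⁻¹' {y} ∩ U ⁻¹' {u})).toReal := by
    intro y
    rw [sum_fiber μ hX (hmY y)]
    refine Finset.sum_congr rfl fun x _ => ?_
    rw [Set.inter_comm (Y ⁻¹' {y}) (X ⁻¹' {x})]
    exact sum_fiber μ hU ((hmX x).inter (hmY y))
  have hpUf : ∀ u, (μ (U ⁻¹' {u})).toReal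
      = ∑ x, ∑ y, (μ (X ⁻¹' {x} ∩ Y ⁻¹' {y} ∩ U ⁻¹' {u})).toReal := by
    intro u
    rw [sum_fiber μ hX (hmU u)]
    refine Finset.sum_congr rfl fun x _ => ?_
    rw [Set.inter_comm (U ⁻¹' {u}) (X ⁻¹' {x})]
    rw [sum_fiber μ hY ((hmX x).inter (hmU u))]
    refine Finset.sum_congr rfl fun y _ => ?_
    congr 2
    ext ω
    simp only [Set.mem_inter_iff, Set.mem_preimage, Set.mem_singleton_iff]
    tauto
  have hpXYf : ∀ x y, (μ (X ⁻¹' {x} ∩ Y ⁻¹' {y})).toReal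
      = ∑ u, (μ (X ⁻¹' {x} ∩ Y ⁻¹' {y} ∩ U ⁻¹' {u})).toReal := fun x y =>
    sum_fiber μ hU ((hmX x).inter (hmY y))
  have hpYUf : ∀ y u, (μ (Y ⁻¹' {y} ∩ U ⁻¹' {u})).toReal
      = ∑ x, (μ (X ⁻¹' {x} ∩ Y ⁻¹' {y} ∩ U ⁻¹' {u})).toReal := by
    intro y u
    rw [sum_fiber μ hX ((hmY y).inter (hmU u))]
    refine Finset.sum_congr rfl fun x _ => ?_
    congr 2
    ext ω
    simp only [Set.mem_inter_iff, Set.mem_preimage, Set.mem_singleton_iff]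
    tauto
  have hpXUf : ∀ x u, (μ (X ⁻¹' {x} ∩ U ⁻¹' {u})).toReal
      = ∑ y, (μ (X ⁻¹' {x} ∩ Y ⁻¹' {y} ∩ U ⁻¹' {u})).toReal := by
    intro x u
    rw [sum_fiber μ hY ((hmX x).inter (hmU u))]
    refine Finset.sum_congr rfl fun y _ => ?_
    congr 2
    ext ω
    simp only [Set.mem_inter_iff, Set.mem_preimage, Set.mem_singleton_iff]
    tauto
  have htotf : ∑ x, (μ (X ⁻¹' {x})).toReal = 1 := by
    have h := (sum_fiber μ hX (MeasurableSet.univ) (B := Set.univ)).symm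
    simpa [measure_univ] using h
  -- entropy translations
  have entX : ent μ X = ∑ x, negMulLog ((μ (X ⁻¹' {x})).toReal) := rfl
  have entY : ent μ Y = ∑ y, negMulLog ((μ (Y ⁻¹' {y})).toReal) := rfl
  have entU : ent μ U = ∑ u, negMulLog ((μ (U ⁻¹' {u})).toReal) := rfl
  have entXU : ent μ (fun ω => (X ω, U ω))
      = ∑ x, ∑ u, negMulLog ((μ (X ⁻¹' {x} ∩ U ⁻¹' {u})).toReal) := by
    rw [ent, Fintype.sum_prod_type]
    exact Finset.sum_congr rfl fun x _ => Finset.sum_congr rfl fun u _ => by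
      rw [preimage_pair]
  have entXY : ent μ (fun ω => (X ω, Y ω))
      = ∑ x, ∑ y, negMulLog ((μ (X ⁻¹' {x} ∩ Y ⁻¹' {y})).toReal) := by
    rw [ent, Fintype.sum_prod_type]
    exact Finset.sum_congr rfl fun x _ => Finset.sum_congr rfl fun y _ => by
      rw [preimage_pair]
  have entUY : ent μ (fun ω => (U ω, Y ω))
      = ∑ y, ∑ u, negMulLog ((μ (Y ⁻¹' {y} ∩ U ⁻¹' {u})).toReal) := by
    rw [ent, Fintype.sum_prod_type, Finset.sum_comm]
    refine Finset.sum_congr rfl fun y _ => Finset.sum_congr rfl fun u _ => ?_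
    rw [preimage_pair, Set.inter_comm]
  have entYX : ent μ (fun ω => (Y ω, X ω))
      = ∑ x, ∑ y, negMulLog ((μ (X ⁻¹' {x} ∩ Y ⁻¹' {y})).toReal) := by
    rw [ent, Fintype.sum_prod_type, Finset.sum_comm]
    refine Finset.sum_congr rfl fun x _ => Finset.sum_congr rfl fun y _ => ?_
    rw [preimage_pair, Set.inter_comm]
  have entXUY : ent μ (fun ω => (X ω, U ω, Y ω))
      = ∑ x, ∑ y, ∑ u, negMulLog ((μ (X ⁻¹' {x} ∩ Y ⁻¹' {y} ∩ U ⁻¹' {u})).toReal) := by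
    rw [ent, Fintype.sum_prod_type]
    refine Finset.sum_congr rfl fun x _ => ?_
    rw [Fintype.sum_prod_type, Finset.sum_comm]
    refine Finset.sum_congr rfl fun y _ => Finset.sum_congr rfl fun u _ => ?_
    have hset : (fun ω => (X ω, U ω, Y ω)) ⁻¹' {(x, u, y)}
        = X ⁻¹' {x} ∩ Y ⁻¹' {y} ∩ U ⁻¹' {u} := by
      ext ω
      simp only [Set.mem_preimage, Set.mem_singleton_iff, Prod.mk.injEq, Set.mem_inter_iff]
      tauto
    rw [hset]
  have entYXU : ent μ (fun ω => (Y ω, (X ω, U ω)))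
      = ∑ x, ∑ y, ∑ u, negMulLog ((μ (X ⁻¹' {x} ∩ Y ⁻¹' {y} ∩ U ⁻¹' {u})).toReal) := by
    rw [ent, Fintype.sum_prod_type, Finset.sum_comm, Fintype.sum_prod_type]
    refine Finset.sum_congr rfl fun x _ => ?_
    rw [Finset.sum_comm]
    refine Finset.sum_congr rfl fun y _ => Finset.sum_congr rfl fun u _ => ?_
    have hset : (fun ω => (Y ω, X ω, U ω)) ⁻¹' {(y, x, u)}
        = X ⁻¹' {x} ∩ Y ⁻¹' {y} ∩ U ⁻¹' {u} := by
      ext ω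
      simp only [Set.mem_preimage, Set.mem_singleton_iff, Prod.mk.injEq, Set.mem_inter_iff]
      tauto
    rw [hset]
  -- convert the information hypotheses
  rw [mutInfo, entX, entU, entXU] at h1
  rw [condMutInfo, entXY, entUY, entXUY, entY] at h2
  simp only [condEnt] at h3
  rw [entYXU, entXU] at h3
  -- apply the core lemma
  obtain ⟨hlocal, hglobal⟩ := core
    (fun x y u => (μ (X ⁻¹' {x} ∩ Y ⁻¹' {y} ∩ U ⁻¹' {u})).toReal)
    (fun x => (μ (X ⁻¹' {x})).toReal)
    (fun y => (μ (Y ⁻¹' {y})).toReal)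
    (fun u => (μ (U ⁻¹' {u})).toReal)
    (fun x y => (μ (X ⁻¹' {x} ∩ Y ⁻¹' {y})).toReal)
    (fun y u => (μ (Y ⁻¹' {y} ∩ U ⁻¹' {u})).toReal)
    (fun x u => (μ (X ⁻¹' {x} ∩ U ⁻¹' {u})).toReal)
    (fun y => ∑ u, negMulLog ((μ (Y ⁻¹' {y} ∩ U ⁻¹' {u})).toReal / (μ (Y ⁻¹' {y})).toReal))
    (fun _ _ _ => ENNReal.toReal_nonneg)
    hpXf hpYf hpUf hpXYf hpYUf hpXUf (fun _ => rfl) htotf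
    (by linarith [h1]) (by linarith [h2]) (by linarith [h3])
  -- conditional measure translations
  have hcond : ∀ x (B : Set Ω), ((μ[|X ⁻¹' {x}]) B).toReal
      = (μ (X ⁻¹' {x} ∩ B)).toReal / (μ (X ⁻¹' {x})).toReal := by
    intro x B
    rw [ProbabilityTheory.cond_apply (hmX x) μ B, ENNReal.toReal_mul, ENNReal.toReal_inv,
      mul_comm, div_eq_mul_inv]
  have entCond : ∀ x, ent (μ[|X ⁻¹' {x}]) Y
      = ∑ y, negMulLog ((μ (X ⁻¹' {x} ∩ Y ⁻¹' {y})).toReal / (μ (X ⁻¹' {x})).toReal) := by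
    intro x
    rw [ent]
    exact Finset.sum_congr rfl fun y _ => by rw [hcond]
  have hcondEntYX : condEnt μ Y X
      = ∑ x, ∑ y, negMulLog ((μ (X ⁻¹' {x} ∩ Y ⁻¹' {y})).toReal)
        - ∑ x, negMulLog ((μ (X ⁻¹' {x})).toReal) := by
    rw [condEnt, entYX, entX]
  -- the feasible point
  set s₀ : ℝ := ∑ y, (μ (Y ⁻¹' {y})).toReal
      * ∑ u, negMulLog ((μ (Y ⁻¹' {y} ∩ U ⁻¹' {u})).toReal / (μ (Y ⁻¹' {y})).toReal) with hs₀
  have hmem : s₀ ∈ S := by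
    rw [hS]
    refine ⟨fun y => ∑ u, negMulLog ((μ (Y ⁻¹' {y} ∩ U ⁻¹' {u})).toReal / (μ (Y ⁻¹' {y})).toReal),
      ?_, ?_, ?_⟩
    · intro y
      refine Finset.sum_nonneg fun u _ => ?_
      refine negMulLog_nonneg (div_nonneg ENNReal.toReal_nonneg ENNReal.toReal_nonneg) ?_
      rcases eq_or_ne ((μ (Y ⁻¹' {y})).toReal) 0 with h0 | hne
      · rw [h0, div_zero]; exact zero_le_one
      · exact div_le_one_of_le₀
          (ENNReal.toReal_mono (measure_ne_top μ _) (measure_mono Set.inter_subset_left))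
          ENNReal.toReal_nonneg
    · intro x hx
      have hxpos : 0 < (μ (X ⁻¹' {x})).toReal :=
        ENNReal.toReal_pos (ne_of_gt hx) (measure_ne_top μ _)
      have hl := hlocal x hxpos
      rw [entCond x, hcondEntYX]
      simp only [hcond]
      have hexp : ∀ y : 𝒴,
          ((μ (Y ⁻¹' {y})).toReal
              - (μ (X ⁻¹' {x} ∩ Y ⁻¹' {y})).toReal / (μ (X ⁻¹' {x})).toReal)
            * (∑ u, negMulLog ((μ (Y ⁻¹' {y} ∩ U ⁻¹' {u})).toReal / (μ (Y ⁻¹' {y})).toReal))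
          = (μ (Y ⁻¹' {y})).toReal
              * (∑ u, negMulLog ((μ (Y ⁻¹' {y} ∩ U ⁻¹' {u})).toReal / (μ (Y ⁻¹' {y})).toReal))
            - ((μ (X ⁻¹' {x} ∩ Y ⁻¹' {y})).toReal / (μ (X ⁻¹' {x})).toReal)
              * (∑ u, negMulLog ((μ (Y ⁻¹' {y} ∩ U ⁻¹' {u})).toReal / (μ (Y ⁻¹' {y})).toReal)) := by
        intro y; ring
      rw [Finset.sum_congr rfl fun y (_ : y ∈ Finset.univ) => hexp y, Finset.sum_sub_distrib]
      linarith [hl, hglobal]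
    · rfl
  have hfin : ent μ U = condEnt μ Y X + s₀ := by
    rw [entU, hcondEntYX]
    linarith [hglobal]
  calc ent μ U = condEnt μ Y X + s₀ := hfin
    _ ≤ condEnt μ Y X + sSup S := by linarith [le_csSup hbdd hmem]
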